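/- Let f : (0,∞) → ℝ be continuous, strictly increasing and convex. Then for all distinct x, y ∈ (0,∞) with x < y, f( (x·y)^{1/4} · ((x+y)/2)^{1/2} ) ≤ (1/(y−x)) · ∫_x^y f(t) dt. (This resolves affirmatively the conjecture of Ebanks that P_f ≤ R_f for strictly increasing convex f.) -/

import Mathlib

open Set MeasureTheory intervalIntegral

/-- Ebanks' conjecture: for a continuous, strictly increasing, convex function
`f` on `(0,∞)`, we have `P_f(x,y) ≤ R_f(x,y)` for all `0 < x < y`. -/
theorem ebanks_conjecture (f : ℝ → ℝ)
    (hcont : ContinuousOn f (Ioi 0))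
    (hmono : StrictMonoOn f (Ioi 0))
    (hconv : ConvexOn ℝ (Ioi 0) f) :
    ∀ x y : ℝ, 0 < x → x < y →
      f ((x * y) ^ ((1 : ℝ) / 4) * ((x + y) / 2) ^ ((1 : ℝ) / 2)) ≤
        (1 / (y - x)) * ∫ t in x..y, f t := by
  intro x y hx hxy
  have hy : 0 < y := hx.trans hxy
  set m : ℝ := (x + y) / 2 with hm_def
  have hm : 0 < m := by positivity
  set P : ℝ := (x * y) ^ ((1 : ℝ) / 4) * m ^ ((1 : ℝ) / 2) with hP_def
  have hP : 0 < P := by positivity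
  -- Step 1: P ≤ m by AM-GM
  have hxy_le : x * y ≤ m ^ 2 := by
    nlinarith [sq_nonneg (x - y)]
  have hPm : P ≤ m := by
    have h1 : (x * y) ^ ((1 : ℝ) / 4) ≤ (m ^ 2) ^ ((1 : ℝ) / 4) :=
      Real.rpow_le_rpow (by positivity) hxy_le (by norm_num)
    have h2 : (m ^ 2) ^ ((1 : ℝ) / 4) = m ^ ((1 : ℝ) / 2) := by
      rw [← Real.rpow_natCast m 2, ← Real.rpow_mul hm.le]
      norm_num
    calc P ≤ m ^ ((1 : ℝ) / 2) * m ^ ((1 : ℝ) / 2) := by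
            rw [hP_def]
            apply mul_le_mul_of_nonneg_right (h2 ▸ h1) (by positivity)
      _ = m := by
            rw [← Real.rpow_add hm]
            norm_num
  -- Step 2: f P ≤ f m
  have hfPm : f P ≤ f m := hmono.monotoneOn hP hm hPm
  -- Step 3: Jensen / left Hermite-Hadamard on Icc x y
  have hIcc : Icc x y ⊆ Ioi 0 := fun t ht => lt_of_lt_of_le hx ht.1
  have hconv' : ConvexOn ℝ (Icc x y) f := hconv.subset hIcc (convex_Icc x y)
  have hcont' : ContinuousOn f (Icc x y) := hcont.mono hIcc
  have h0 : (volume (Icc x y)) ≠ 0 := by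
    simp [Real.volume_Icc, sub_pos.2 hxy, ENNReal.ofReal_eq_zero, not_le]
    linarith
  have hT : (volume (Icc x y)) ≠ ⊤ := by simp [Real.volume_Icc]
  have hid : IntegrableOn (fun t : ℝ => t) (Icc x y) volume :=
    (continuous_id.continuousOn).integrableOn_Icc
  have hfi : IntegrableOn f (Icc x y) volume := hcont'.integrableOn_Icc
  have hmem : ∀ᵐ t ∂(volume.restrict (Icc x y)), (fun t : ℝ => t) t ∈ Icc x y := by
    filter_upwards [ae_restrict_mem measurableSet_Icc] with t ht using ht
  have hjensen := hconv'.map_set_average_le hcont' isClosed_Icc h0 hT hmem hid hfi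
  -- compute the average of id
  have hvol : (volume (Icc x y)).toReal = y - x := by
    simp [Real.volume_Icc, ENNReal.toReal_ofReal (by linarith : (0:ℝ) ≤ y - x)]
  have hint_id : ∫ t in Icc x y, t = (y ^ 2 - x ^ 2) / 2 := by
    rw [MeasureTheory.integral_Icc_eq_integral_Ioc, ← intervalIntegral.integral_of_le hxy.le,
      integral_id]
  have havg_id : (⨍ t in Icc x y, t) = m := by
    have hne : y - x ≠ 0 := by linarith
    rw [setAverage_eq, measureReal_def, hint_id, hvol, smul_eq_mul, hm_def]
    field_simp
    ring
  rw [havg_id] at hjensen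
  -- rewrite the average of f
  have havg_f : (⨍ t in Icc x y, f t) = (1 / (y - x)) * ∫ t in x..y, f t := by
    rw [setAverage_eq, measureReal_def, hvol, smul_eq_mul,
      MeasureTheory.integral_Icc_eq_integral_Ioc,
      ← intervalIntegral.integral_of_le hxy.le]
    ring
  rw [havg_f] at hjensen
  exact hfPm.trans hjensen
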